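/- Let P be a projective POVM with M projectors and fix integers q ≥ 2, t ≥ 0. The minimum number n such that there exist commuting q-observables Q_1,...,Q_n consistent with P even after any t errors on their classical outcomes equals n_q(M, 2t+1), where n_q(M,d) is the shortest length of a q-ary code with at least M codewords and minimum distance at least d. -/
import Mathlib


/-- A `q`-ary code with minimum distance at least `d`. -/
def IsCode (q n d : ℕ) (C : Finset (Fin n → Fin q)) : Prop :=
  ∀ x ∈ C, ∀ y ∈ C, x ≠ y → d ≤ hammingDist x y

/-- Shortest length of a `q`-ary code with at least `M` codewords and minimum
distance at least `d`. -/
noncomputable def nq (q M d : ℕ) : ℕ :=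
  sInf {n : ℕ | ∃ C : Finset (Fin n → Fin q), IsCode q n d C ∧ M ≤ C.card}

/-- `n` commuting `q`-observables, given by outcome-coefficient vectors
`x : Fin M → Fin n → Fin q`, are consistent with an `M`-outcome projective POVM
even after `t` errors on the classical outcomes: some decoding function `f`
recovers the correct label from any outcome word within Hamming distance `t`
of the true codeword. -/
def ConsistentAfterErrors (q M n t : ℕ) : Prop :=
  ∃ x : Fin M → Fin n → Fin q, ∃ f : (Fin n → Fin q) → Fin M,
    ∀ k (y : Fin n → Fin q), hammingDist y (x k) ≤ t → f y = k

/-- Midpoint construction: if two words are within distance `2t`, there is a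
word within distance `t` of both. -/
lemma exists_mid {n q t : ℕ} (a b : Fin n → Fin q) (h : hammingDist a b ≤ 2 * t) :
    ∃ y : Fin n → Fin q, hammingDist y a ≤ t ∧ hammingDist y b ≤ t := by
  classical
  set D : Finset (Fin n) := Finset.univ.filter (fun i => a i ≠ b i) with hD
  have hDcard : D.card = hammingDist a b := rfl
  obtain ⟨S, hSD, hScard⟩ := Finset.exists_subset_card_eq (s := D) (n := min t D.card)
    (min_le_right _ _)
  refine ⟨fun i => if i ∈ S then b i else a i, ?_, ?_⟩
  · have : (Finset.univ.filter fun i => (if i ∈ S then b i else a i) ≠ a i) = S := by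
      ext i
      simp only [Finset.mem_filter, Finset.mem_univ, true_and]
      by_cases hi : i ∈ S
      · have hab : a i ≠ b i := by simpa [hD] using hSD hi
        simp [hi, hab.symm]
      · simp [hi]
    have : hammingDist (fun i => if i ∈ S then b i else a i) a = S.card := by
      rw [hammingDist]; exact congrArg Finset.card this
    rw [this, hScard]; exact min_le_left _ _
  · have hset : (Finset.univ.filter fun i => (if i ∈ S then b i else a i) ≠ b i) = D \ S := by
      ext i
      simp only [Finset.mem_filter, Finset.mem_univ, true_and, Finset.mem_sdiff]
      by_cases hi : i ∈ S
      · simp [hi]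
      · simp only [hi, if_neg, not_false_iff, and_true]
        simp [hD]
    have hcd : hammingDist (fun i => if i ∈ S then b i else a i) b = (D \ S).card := by
      rw [hammingDist]; exact congrArg Finset.card hset
    rw [hcd, Finset.card_sdiff_of_subset hSD, hScard]
    omega

/-- the minimum number of commuting `q`-observables consistent
with an `M`-outcome projective POVM after any `t` outcome errors equals
`n_q(M, 2t+1)`. -/
theorem stmt11 (q M t : ℕ) (hq : 2 ≤ q) (hM : 0 < M) :
    sInf {n : ℕ | ConsistentAfterErrors q M n t} = nq q M (2 * t + 1) := by
  classical
  rw [nq]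
  congr 1
  ext n
  simp only [Set.mem_setOf_eq]
  constructor
  · rintro ⟨x, f, hf⟩
    have hxinj : Function.Injective x := by
      intro k k' hkk'
      have h1 : f (x k) = k := hf k (x k) (by simp)
      have h2 : f (x k) = k' := by
        rw [hkk']; exact hf k' (x k') (by simp)
      rw [h1] at h2; exact h2
    refine ⟨Finset.image x Finset.univ, ?_, ?_⟩
    · intro u hu v hv huv
      simp only [Finset.mem_image, Finset.mem_univ, true_and] at hu hv
      obtain ⟨k, rfl⟩ := hu
      obtain ⟨k', rfl⟩ := hv
      by_contra hlt
      push_neg at hlt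
      have hle : hammingDist (x k) (x k') ≤ 2 * t := by omega
      obtain ⟨y, hy1, hy2⟩ := exists_mid (x k) (x k') hle
      have e1 : f y = k := hf k y hy1
      have e2 : f y = k' := hf k' y hy2
      exact huv (by rw [e1.symm.trans e2])
    · rw [Finset.card_image_of_injective _ hxinj]
      simp
  · rintro ⟨C, hC, hcard⟩
    have hM' : Nonempty (Fin M) := ⟨⟨0, hM⟩⟩
    set x : Fin M → Fin n → Fin q :=
      fun k => (C.equivFin.symm (Fin.castLE hcard k) : { a // a ∈ C }).1 with hx
    have hxmem : ∀ k, x k ∈ C := fun k => (C.equivFin.symm (Fin.castLE hcard k)).2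
    have hxinj : Function.Injective x := by
      intro k k' h
      have : C.equivFin.symm (Fin.castLE hcard k) = C.equivFin.symm (Fin.castLE hcard k') :=
        Subtype.ext h
      have := C.equivFin.symm.injective this
      exact Fin.castLE_injective hcard this
    refine ⟨x, fun y => if h : ∃ k, hammingDist y (x k) ≤ t then h.choose else ⟨0, hM⟩, ?_⟩
    intro k y hy
    have h : ∃ k, hammingDist y (x k) ≤ t := ⟨k, hy⟩
    simp only [dif_pos h]
    set k' := h.choose with hk'
    have hk'd : hammingDist y (x k') ≤ t := h.choose_spec
    have hdd : hammingDist (x k') (x k) ≤ 2 * t := by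
      calc hammingDist (x k') (x k) ≤ hammingDist (x k') y + hammingDist y (x k) :=
            hammingDist_triangle _ _ _
        _ ≤ t + t := by rw [hammingDist_comm]; exact Nat.add_le_add hk'd hy
        _ = 2 * t := by ring
    have hxeq : x k' = x k := by
      by_contra hne
      have := hC (x k') (hxmem k') (x k) (hxmem k) hne
      omega
    exact hxinj hxeq
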